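/- Let (p_n) be a sequence of positive integers, and for each n let Σ_n and Σ̃_n be real symmetric p_n×p_n matrices such that sup_n ‖Σ_n‖ < ∞, sup_n ‖Σ̃_n‖ < ∞ and ‖Σ_n − Σ̃_n‖ → 0 as n → ∞. Assume that the empirical spectral distributions μ_{Σ̃_n} converge weakly to a probability measure ν^∞ on ℝ whose cumulative distribution function F_{ν^∞} is β-Hölder continuous for some β ∈ (0,1] (i.e. there is H > 0 with |F_{ν^∞}(s) − F_{ν^∞}(t)| ≤ H·|s−t|^β for all s, t ∈ ℝ). Then μ_{Σ_n} converges weakly to ν^∞, and there exist C > 0 and N ∈ ℕ such that for all n ≥ N: D(μ_{Σ_n}, ν^∞) ≤ C·(‖Σ_n − Σ̃_n‖^{β/(4+2β)} + D(μ_{Σ̃_n}, ν^∞)). -/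

import Mathlib

open MeasureTheory ProbabilityTheory Filter
open scoped NNReal

/-- Spectral (operator) norm of a real matrix. -/
noncomputable def specNorm {m p : Type*} [Fintype m] [Fintype p] [DecidableEq p]
    (M : Matrix m p ℝ) : ℝ :=
  ‖(Matrix.toEuclideanLin M).toContinuousLinearMap‖

/-- Empirical spectral distribution `μ_M = (1/p)·∑_{i} δ_{λ_i}` of a Hermitian
real matrix, as a measure on `ℝ`. -/
noncomputable def esd {p : ℕ} (M : Matrix (Fin p) (Fin p) ℝ) (hM : M.IsHermitian) :
    Measure ℝ :=
  ((p : ℝ≥0))⁻¹ • ∑ i, Measure.dirac (hM.eigenvalues i)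

/-- Cumulative distribution function of a measure on `ℝ`. -/
noncomputable def cdf' (μ : Measure ℝ) (t : ℝ) : ℝ := (μ (Set.Iic t)).toReal

/-- Kolmogorov distance between two measures on `ℝ`. -/
noncomputable def kolDist (μ ν : Measure ℝ) : ℝ := ⨆ t : ℝ, |cdf' μ t - cdf' ν t|

namespace StmtAux

open scoped ENNReal

variable {q : ℕ}

/-! ### Operator-norm and spectral lemmas -/

noncomputable def clm (M : Matrix (Fin q) (Fin q) ℝ) :
    EuclideanSpace ℝ (Fin q) →L[ℝ] EuclideanSpace ℝ (Fin q) :=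
  (Matrix.toEuclideanLin M).toContinuousLinearMap

lemma specNorm_eq (M : Matrix (Fin q) (Fin q) ℝ) : specNorm M = ‖clm M‖ := rfl

lemma specNorm_nonneg (M : Matrix (Fin q) (Fin q) ℝ) : 0 ≤ specNorm M := norm_nonneg _

lemma clm_sub (A B : Matrix (Fin q) (Fin q) ℝ) : clm (A - B) = clm A - clm B := by
  unfold clm; rw [map_sub, map_sub]

lemma specNorm_sub_symm (A B : Matrix (Fin q) (Fin q) ℝ) :
    specNorm (A - B) = specNorm (B - A) := by
  rw [specNorm_eq, specNorm_eq, ← norm_neg, clm_sub, neg_sub, ← clm_sub]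

lemma quad_abs_le (M : Matrix (Fin q) (Fin q) ℝ) (v : EuclideanSpace ℝ (Fin q)) :
    |(inner ℝ (clm M v) v : ℝ)| ≤ specNorm M * ‖v‖ ^ 2 := by
  calc |(inner ℝ (clm M v) v : ℝ)| ≤ ‖clm M v‖ * ‖v‖ := abs_real_inner_le_norm _ _
  _ ≤ (‖clm M‖ * ‖v‖) * ‖v‖ := by
      gcongr; exact (clm M).le_opNorm v
  _ = specNorm M * ‖v‖ ^ 2 := by rw [specNorm_eq]; ring

lemma clm_eigen {A : Matrix (Fin q) (Fin q) ℝ} (hA : A.IsHermitian) (i : Fin q) :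
    clm A (hA.eigenvectorBasis i) = hA.eigenvalues i • hA.eigenvectorBasis i := by
  have h := hA.mulVec_eigenvectorBasis i
  apply (WithLp.equiv 2 (Fin q → ℝ)).injective
  simpa [clm, Matrix.toEuclideanLin_apply] using h

lemma norm_eigenvalue_le {A : Matrix (Fin q) (Fin q) ℝ} (hA : A.IsHermitian) (i : Fin q) :
    |hA.eigenvalues i| ≤ specNorm A := by
  have h1 : ‖hA.eigenvectorBasis i‖ = 1 := hA.eigenvectorBasis.orthonormal.1 i
  have h2 : ‖clm A (hA.eigenvectorBasis i)‖ ≤ ‖clm A‖ * ‖hA.eigenvectorBasis i‖ :=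
    (clm A).le_opNorm _
  rw [clm_eigen hA i, norm_smul, h1, mul_one, mul_one, Real.norm_eq_abs] at h2
  exact h2

lemma parseval {A : Matrix (Fin q) (Fin q) ℝ} (hA : A.IsHermitian)
    (v : EuclideanSpace ℝ (Fin q)) :
    ‖v‖ ^ 2 = ∑ i, (inner ℝ (hA.eigenvectorBasis i) v : ℝ) ^ 2 := by
  have h := hA.eigenvectorBasis.repr.inner_map_map v v
  rw [← real_inner_self_eq_norm_sq, ← h, PiLp.inner_apply]
  simp only [RCLike.inner_apply, conj_trivial]
  exact Finset.sum_congr rfl fun i _ => by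
    rw [hA.eigenvectorBasis.repr_apply_apply, sq]

lemma quad_eq {A : Matrix (Fin q) (Fin q) ℝ} (hA : A.IsHermitian)
    (v : EuclideanSpace ℝ (Fin q)) :
    (inner ℝ (clm A v) v : ℝ)
      = ∑ i, hA.eigenvalues i * (inner ℝ (hA.eigenvectorBasis i) v : ℝ) ^ 2 := by
  have hsym := (Matrix.isHermitian_iff_isSymmetric.1 hA)
  have hrepr : ∀ i, hA.eigenvectorBasis.repr (clm A v) i
      = hA.eigenvalues i * hA.eigenvectorBasis.repr v i := by
    intro i
    rw [hA.eigenvectorBasis.repr_apply_apply, hA.eigenvectorBasis.repr_apply_apply]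
    have h2 : (inner ℝ (hA.eigenvectorBasis i) (clm A v) : ℝ)
        = inner ℝ (clm A (hA.eigenvectorBasis i)) v := by
      have h3 := hsym (hA.eigenvectorBasis i) v
      simpa [clm, LinearMap.coe_toContinuousLinearMap'] using h3.symm
    rw [h2, clm_eigen hA i, real_inner_smul_left]
  have h := hA.eigenvectorBasis.repr.inner_map_map (clm A v) v
  rw [← h, PiLp.inner_apply]
  simp only [RCLike.inner_apply, conj_trivial]
  refine Finset.sum_congr rfl fun i _ => ?_
  rw [hrepr i, hA.eigenvectorBasis.repr_apply_apply, sq]; ring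

lemma exists_inner_ne_zero {A : Matrix (Fin q) (Fin q) ℝ} (hA : A.IsHermitian)
    {v : EuclideanSpace ℝ (Fin q)} (hv : v ≠ 0) :
    ∃ i, (inner ℝ (hA.eigenvectorBasis i) v : ℝ) ≠ 0 := by
  by_contra h
  push_neg at h
  apply hv
  have h0 : hA.eigenvectorBasis.repr v = 0 := by
    ext i
    simpa [hA.eigenvectorBasis.repr_apply_apply] using h i
  simpa using hA.eigenvectorBasis.repr.map_eq_zero_iff.mp h0

lemma inner_eq_zero_of_span {A : Matrix (Fin q) (Fin q) ℝ} (hA : A.IsHermitian)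
    {S : Finset (Fin q)} {v : EuclideanSpace ℝ (Fin q)}
    (hv : v ∈ Submodule.span ℝ (hA.eigenvectorBasis '' (S : Set (Fin q)))) {j : Fin q}
    (hj : j ∉ S) : (inner ℝ (hA.eigenvectorBasis j) v : ℝ) = 0 := by
  induction hv using Submodule.span_induction with
  | mem x hx =>
      obtain ⟨i, hiS, rfl⟩ := hx
      exact hA.eigenvectorBasis.orthonormal.2 (fun h => hj (h ▸ hiS))
  | zero => simp
  | add x y _ _ hx hy => rw [inner_add_right, hx, hy, add_zero]
  | smul c x _ hx => rw [real_inner_smul_right, hx, mul_zero]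

lemma finrank_span_eigen {A : Matrix (Fin q) (Fin q) ℝ} (hA : A.IsHermitian)
    (S : Finset (Fin q)) :
    Module.finrank ℝ (Submodule.span ℝ (hA.eigenvectorBasis '' (S : Set (Fin q))))
      = S.card := by
  have hli : LinearIndependent ℝ (fun i : {x // x ∈ S} => hA.eigenvectorBasis i) :=
    (hA.eigenvectorBasis.orthonormal.linearIndependent).comp _ Subtype.val_injective
  have hr : Set.range (fun i : {x // x ∈ S} => hA.eigenvectorBasis i)
      = hA.eigenvectorBasis '' (S : Set (Fin q)) := by
    ext x
    simp [Set.range, Set.mem_image]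
  rw [← hr, finrank_span_eq_card hli, Fintype.card_coe]

lemma quad_le_of_span {A : Matrix (Fin q) (Fin q) ℝ} (hA : A.IsHermitian)
    {S : Finset (Fin q)} {t : ℝ}
    (hS : ∀ i ∈ S, hA.eigenvalues i ≤ t) {v : EuclideanSpace ℝ (Fin q)}
    (hv : v ∈ Submodule.span ℝ (hA.eigenvectorBasis '' (S : Set (Fin q)))) :
    (inner ℝ (clm A v) v : ℝ) ≤ t * ‖v‖ ^ 2 := by
  rw [quad_eq hA v, parseval hA v, Finset.mul_sum]
  have hz : ∀ j ∉ S, (inner ℝ (hA.eigenvectorBasis j) v : ℝ) = 0 :=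
    fun j hj => inner_eq_zero_of_span hA hv hj
  rw [← Finset.sum_subset (Finset.subset_univ S)
        (fun j _ hj => by rw [hz j hj]; ring),
      ← Finset.sum_subset (Finset.subset_univ S)
        (fun j _ hj => by rw [hz j hj]; ring)]
  exact Finset.sum_le_sum fun i hi => mul_le_mul_of_nonneg_right (hS i hi) (sq_nonneg _)

lemma lt_quad_of_span {A : Matrix (Fin q) (Fin q) ℝ} (hA : A.IsHermitian)
    {S : Finset (Fin q)} {t : ℝ}
    (hS : ∀ i ∈ S, t < hA.eigenvalues i) {v : EuclideanSpace ℝ (Fin q)}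
    (hv : v ∈ Submodule.span ℝ (hA.eigenvectorBasis '' (S : Set (Fin q)))) (hv0 : v ≠ 0) :
    t * ‖v‖ ^ 2 < (inner ℝ (clm A v) v : ℝ) := by
  obtain ⟨i0, hi0⟩ := exists_inner_ne_zero hA hv0
  have hi0S : i0 ∈ S := by
    by_contra h; exact hi0 (inner_eq_zero_of_span hA hv h)
  rw [quad_eq hA v, parseval hA v, Finset.mul_sum]
  have hz : ∀ j ∉ S, (inner ℝ (hA.eigenvectorBasis j) v : ℝ) = 0 :=
    fun j hj => inner_eq_zero_of_span hA hv hj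
  rw [← Finset.sum_subset (Finset.subset_univ S)
        (fun j _ hj => by rw [hz j hj]; ring),
      ← Finset.sum_subset (Finset.subset_univ S)
        (fun j _ hj => by rw [hz j hj]; ring)]
  refine Finset.sum_lt_sum (fun i hi => mul_le_mul_of_nonneg_right (le_of_lt (hS i hi))
    (sq_nonneg _)) ⟨i0, hi0S, ?_⟩
  have hpos : (0:ℝ) < (inner ℝ (hA.eigenvectorBasis i0) v : ℝ) ^ 2 :=
    lt_of_le_of_ne (sq_nonneg _) (Ne.symm (pow_ne_zero 2 hi0))
  exact mul_lt_mul_of_pos_right (hS i0 hi0S) hpos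

/-- Weyl-type eigenvalue counting inequality. -/
lemma count_le {A : Matrix (Fin q) (Fin q) ℝ} (hA : A.IsHermitian)
    {B : Matrix (Fin q) (Fin q) ℝ} (hB : B.IsHermitian) (t : ℝ) :
    (Finset.univ.filter fun i => hA.eigenvalues i ≤ t).card ≤
      (Finset.univ.filter fun i => hB.eigenvalues i ≤ t + specNorm (A - B)).card := by
  set ε := specNorm (A - B) with hε
  by_contra hcon
  push_neg at hcon
  set SA := Finset.univ.filter fun i => hA.eigenvalues i ≤ t with hSA
  set SB := Finset.univ.filter fun i => hB.eigenvalues i ≤ t + ε with hSB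
  set SC := Finset.univ.filter (fun i => ¬ hB.eigenvalues i ≤ t + ε) with hSC
  have hcard : SB.card + SC.card = q := by
    rw [hSB, hSC, Finset.card_filter_add_card_filter_not]
    simp
  set U := Submodule.span ℝ (hA.eigenvectorBasis '' (SA : Set (Fin q))) with hUdef
  set V := Submodule.span ℝ (hB.eigenvectorBasis '' (SC : Set (Fin q))) with hVdef
  have hU : Module.finrank ℝ U = SA.card := finrank_span_eigen hA SA
  have hV : Module.finrank ℝ V = SC.card := finrank_span_eigen hB SC
  have hdim : Module.finrank ℝ (EuclideanSpace ℝ (Fin q)) = q := by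
    simp [finrank_euclideanSpace]
  have hsum := Submodule.finrank_sup_add_finrank_inf_eq U V
  have hle : Module.finrank ℝ ↥(U ⊔ V) ≤ q :=
    le_trans (Submodule.finrank_le _) (le_of_eq hdim)
  have hpos : 0 < Module.finrank ℝ ↥(U ⊓ V) := by omega
  obtain ⟨w, hw⟩ := Module.finrank_pos_iff_exists_ne_zero.mp hpos
  set v : EuclideanSpace ℝ (Fin q) := (w : EuclideanSpace ℝ (Fin q)) with hvdef
  have hv0 : v ≠ 0 := fun h => hw (Subtype.ext h)
  have hvU : v ∈ U := (Submodule.mem_inf.mp w.2).1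
  have hvV : v ∈ V := (Submodule.mem_inf.mp w.2).2
  have h1 : (inner ℝ (clm A v) v : ℝ) ≤ t * ‖v‖ ^ 2 :=
    quad_le_of_span hA (fun i hi => by
      rw [hSA] at hi; simpa using (Finset.mem_filter.mp hi).2) hvU
  have h2 : (t + ε) * ‖v‖ ^ 2 < (inner ℝ (clm B v) v : ℝ) :=
    lt_quad_of_span hB (fun i hi => not_le.1 (by
      rw [hSC] at hi; simpa using (Finset.mem_filter.mp hi).2)) hvV hv0
  have h3 : (inner ℝ (clm B v) v : ℝ) - (inner ℝ (clm A v) v : ℝ) ≤ ε * ‖v‖ ^ 2 := by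
    have h4 : (inner ℝ (clm (B - A) v) v : ℝ) ≤ specNorm (B - A) * ‖v‖ ^ 2 :=
      le_trans (le_abs_self _) (quad_abs_le _ _)
    rw [clm_sub, specNorm_sub_symm B A, ← hε] at h4
    rw [ContinuousLinearMap.sub_apply, inner_sub_left] at h4
    exact h4
  have hnv : 0 < ‖v‖ ^ 2 := by
    have := norm_pos_iff.mpr hv0
    positivity
  nlinarith

/-! ### Monotone-tuple lemmas -/

lemma mono_le_of_card {r : ℕ} {g : Fin r → ℝ} (hg : Monotone g) {s : ℝ} {k : Fin r}
    (h : (k : ℕ) + 1 ≤ (Finset.univ.filter fun i => g i ≤ s).card) : g k ≤ s := by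
  by_contra hgk
  push_neg at hgk
  have hsub : (Finset.univ.filter fun i => g i ≤ s) ⊆ Finset.Iio k := by
    intro i hi
    rw [Finset.mem_filter] at hi
    rw [Finset.mem_Iio]
    by_contra hik
    push_neg at hik
    exact absurd (le_trans (hg hik) hi.2) (not_le.mpr hgk)
  have h2 := Finset.card_le_card hsub
  rw [Fin.card_Iio] at h2
  omega

lemma card_le_of_mono {r : ℕ} {g : Fin r → ℝ} (hg : Monotone g) (k : Fin r) :
    (k : ℕ) + 1 ≤ (Finset.univ.filter fun i => g i ≤ g k).card := by
  have hsub : Finset.Iic k ⊆ Finset.univ.filter fun i => g i ≤ g k := by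
    intro i hi
    rw [Finset.mem_Iic] at hi
    exact Finset.mem_filter.mpr ⟨Finset.mem_univ _, hg hi⟩
  have h2 := Finset.card_le_card hsub
  rwa [Fin.card_Iic] at h2

lemma card_filter_comp_perm {r : ℕ} (g : Fin r → ℝ) (σ : Equiv.Perm (Fin r)) (s : ℝ) :
    (Finset.univ.filter fun i => g (σ i) ≤ s).card
      = (Finset.univ.filter fun i => g i ≤ s).card := by
  apply Finset.card_equiv σ
  intro i
  simp

/-- Weyl inequality for sorted eigenvalues. -/
lemma sorted_weyl {A B : Matrix (Fin q) (Fin q) ℝ} (hA : A.IsHermitian)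
    (hB : B.IsHermitian) (k : Fin q) :
    |hA.eigenvalues (Tuple.sort hA.eigenvalues k)
      - hB.eigenvalues (Tuple.sort hB.eigenvalues k)| ≤ specNorm (A - B) := by
  have hmA : Monotone (hA.eigenvalues ∘ Tuple.sort hA.eigenvalues) :=
    Tuple.monotone_sort _
  have hmB : Monotone (hB.eigenvalues ∘ Tuple.sort hB.eigenvalues) :=
    Tuple.monotone_sort _
  set gA := hA.eigenvalues ∘ Tuple.sort hA.eigenvalues with hgA
  set gB := hB.eigenvalues ∘ Tuple.sort hB.eigenvalues with hgB
  have keyA : ∀ s : ℝ, (Finset.univ.filter fun i => gA i ≤ s).card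
      = (Finset.univ.filter fun i => hA.eigenvalues i ≤ s).card :=
    fun s => card_filter_comp_perm hA.eigenvalues (Tuple.sort hA.eigenvalues) s
  have keyB : ∀ s : ℝ, (Finset.univ.filter fun i => gB i ≤ s).card
      = (Finset.univ.filter fun i => hB.eigenvalues i ≤ s).card :=
    fun s => card_filter_comp_perm hB.eigenvalues (Tuple.sort hB.eigenvalues) s
  rw [abs_sub_le_iff]
  constructor
  · -- gA k ≤ gB k + ε
    have h1 : (k : ℕ) + 1 ≤ (Finset.univ.filter fun i => gB i ≤ gB k).card :=
      card_le_of_mono hmB k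
    rw [keyB] at h1
    have h2 := count_le hB hA (gB k)
    rw [specNorm_sub_symm B A] at h2
    have h3 : (k : ℕ) + 1
        ≤ (Finset.univ.filter fun i => gA i ≤ gB k + specNorm (A - B)).card := by
      rw [keyA]; exact le_trans h1 h2
    have := mono_le_of_card hmA h3
    simp only [hgA, hgB, Function.comp] at this ⊢
    linarith
  · -- gB k ≤ gA k + ε
    have h1 : (k : ℕ) + 1 ≤ (Finset.univ.filter fun i => gA i ≤ gA k).card :=
      card_le_of_mono hmA k
    rw [keyA] at h1
    have h2 := count_le hA hB (gA k)
    have h3 : (k : ℕ) + 1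
        ≤ (Finset.univ.filter fun i => gB i ≤ gA k + specNorm (A - B)).card := by
      rw [keyB]; exact le_trans h1 h2
    have := mono_le_of_card hmB h3
    simp only [hgA, hgB, Function.comp] at this ⊢
    linarith

/-! ### Measure-theoretic lemmas -/

lemma esd_Iic {r : ℕ} (hr : 0 < r) (M : Matrix (Fin r) (Fin r) ℝ) (hM : M.IsHermitian)
    (t : ℝ) :
    esd M hM (Set.Iic t) = (r : ℝ≥0∞)⁻¹ *
      ((Finset.univ.filter fun i => hM.eigenvalues i ≤ t).card : ℝ≥0∞) := by
  unfold esd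
  rw [Measure.smul_apply, Measure.finset_sum_apply]
  have h1 : ∀ i : Fin r, Measure.dirac (hM.eigenvalues i) (Set.Iic t)
      = if hM.eigenvalues i ≤ t then (1:ℝ≥0∞) else 0 := by
    intro i
    rw [Measure.dirac_apply' _ measurableSet_Iic]
    by_cases h : hM.eigenvalues i ≤ t <;> simp [Set.indicator, h]
  rw [Finset.sum_congr rfl fun i _ => h1 i, Finset.sum_boole, ENNReal.smul_def,
    ENNReal.coe_inv (by exact_mod_cast hr.ne' : (r:ℝ≥0) ≠ 0)]
  norm_cast

lemma cdf'_esd {r : ℕ} (hr : 0 < r) (M : Matrix (Fin r) (Fin r) ℝ) (hM : M.IsHermitian)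
    (t : ℝ) :
    cdf' (esd M hM) t
      = ((Finset.univ.filter fun i => hM.eigenvalues i ≤ t).card : ℝ) / r := by
  unfold cdf'
  rw [esd_Iic hr, ENNReal.toReal_mul, ENNReal.toReal_inv]
  simp [div_eq_inv_mul]

lemma isProb_esd {r : ℕ} (hr : 0 < r) (M : Matrix (Fin r) (Fin r) ℝ) (hM : M.IsHermitian) :
    IsProbabilityMeasure (esd M hM) := by
  constructor
  unfold esd
  rw [Measure.smul_apply, Measure.finset_sum_apply]
  have h1 : ∀ i : Fin r, Measure.dirac (hM.eigenvalues i) Set.univ = 1 := fun i => by simp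
  rw [Finset.sum_congr rfl fun i _ => h1 i, Finset.sum_const, Finset.card_univ,
    Fintype.card_fin, nsmul_eq_mul, mul_one, ENNReal.smul_def,
    ENNReal.coe_inv (by exact_mod_cast hr.ne' : (r:ℝ≥0) ≠ 0)]
  norm_cast
  exact ENNReal.inv_mul_cancel (by exact_mod_cast hr.ne') (by simp)

lemma cdf'_nonneg (μ : Measure ℝ) (t : ℝ) : 0 ≤ cdf' μ t := ENNReal.toReal_nonneg

lemma cdf'_le_one (μ : Measure ℝ) [IsProbabilityMeasure μ] (t : ℝ) : cdf' μ t ≤ 1 := by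
  unfold cdf'
  calc (μ (Set.Iic t)).toReal ≤ (μ Set.univ).toReal :=
        ENNReal.toReal_mono (by simp) (measure_mono (Set.subset_univ _))
  _ = 1 := by simp

lemma kolDist_bddAbove (μ ν : Measure ℝ) [IsProbabilityMeasure μ] [IsProbabilityMeasure ν] :
    BddAbove (Set.range fun t => |cdf' μ t - cdf' ν t|) := by
  refine ⟨1, ?_⟩
  rintro x ⟨t, rfl⟩
  have h1 := cdf'_nonneg μ t; have h2 := cdf'_le_one μ t
  have h3 := cdf'_nonneg ν t; have h4 := cdf'_le_one ν t
  rw [abs_le]; constructor <;> linarith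

lemma le_kolDist {μ ν : Measure ℝ} [IsProbabilityMeasure μ] [IsProbabilityMeasure ν] (t : ℝ) :
    |cdf' μ t - cdf' ν t| ≤ kolDist μ ν :=
  le_ciSup (kolDist_bddAbove μ ν) t

lemma kolDist_nonneg {μ ν : Measure ℝ} [IsProbabilityMeasure μ] [IsProbabilityMeasure ν] :
    0 ≤ kolDist μ ν := le_trans (abs_nonneg _) (le_kolDist 0)

lemma kolDist_le {μ ν : Measure ℝ} {c : ℝ} (h : ∀ t, |cdf' μ t - cdf' ν t| ≤ c) :
    kolDist μ ν ≤ c := ciSup_le h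

lemma integral_esd {r : ℕ} (M : Matrix (Fin r) (Fin r) ℝ) (hM : M.IsHermitian)
    (f : BoundedContinuousFunction ℝ ℝ) :
    ∫ x, f x ∂(esd M hM) = (r : ℝ)⁻¹ * ∑ i, f (hM.eigenvalues i) := by
  unfold esd
  rw [ENNReal.smul_def, integral_smul_measure,
    integral_finset_sum_measure (fun i _ => ?_)]
  · rw [Finset.sum_congr rfl fun i _ => integral_dirac (fun x => f x) (hM.eigenvalues i)]
    simp [ENNReal.toReal_inv]
  · exact f.integrable _

end StmtAux

open StmtAux in
theorem stmt_16 (p : ℕ → ℕ) (hp : ∀ n, 0 < p n)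
    (Sig1 Sig2 : (n : ℕ) → Matrix (Fin (p n)) (Fin (p n)) ℝ)
    (hSig1 : ∀ n, (Sig1 n).IsHermitian) (hSig2 : ∀ n, (Sig2 n).IsHermitian)
    (hb1 : ∃ K : ℝ, ∀ n, specNorm (Sig1 n) ≤ K) (hb2 : ∃ K : ℝ, ∀ n, specNorm (Sig2 n) ≤ K)
    (hdiff : Tendsto (fun n => specNorm (Sig1 n - Sig2 n)) atTop (nhds 0))
    (ν : Measure ℝ) [IsProbabilityMeasure ν]
    (hweak : ∀ f : BoundedContinuousFunction ℝ ℝ,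
      Tendsto (fun n => ∫ x, f x ∂(esd (Sig2 n) (hSig2 n))) atTop (nhds (∫ x, f x ∂ν)))
    (β : ℝ) (hβ : 0 < β) (hβ1 : β ≤ 1)
    (Hconst : ℝ) (hH : 0 < Hconst)
    (hHol : ∀ s t : ℝ, |cdf' ν s - cdf' ν t| ≤ Hconst * |s - t| ^ β) :
    (∀ f : BoundedContinuousFunction ℝ ℝ,
      Tendsto (fun n => ∫ x, f x ∂(esd (Sig1 n) (hSig1 n))) atTop (nhds (∫ x, f x ∂ν))) ∧
    ∃ C > (0:ℝ), ∃ N : ℕ, ∀ n ≥ N,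
      kolDist (esd (Sig1 n) (hSig1 n)) ν ≤
        C * (specNorm (Sig1 n - Sig2 n) ^ (β / (4 + 2 * β)) +
          kolDist (esd (Sig2 n) (hSig2 n)) ν) := by
  have hε0 : ∀ n, 0 ≤ specNorm (Sig1 n - Sig2 n) := fun n => specNorm_nonneg _
  have hP1 : ∀ n, IsProbabilityMeasure (esd (Sig1 n) (hSig1 n)) :=
    fun n => isProb_esd (hp n) _ _
  have hP2 : ∀ n, IsProbabilityMeasure (esd (Sig2 n) (hSig2 n)) :=
    fun n => isProb_esd (hp n) _ _
  -- cdf comparisons via the counting lemma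
  have comp1 : ∀ n t, cdf' (esd (Sig1 n) (hSig1 n)) t
      ≤ cdf' (esd (Sig2 n) (hSig2 n)) (t + specNorm (Sig1 n - Sig2 n)) := by
    intro n t
    rw [cdf'_esd (hp n), cdf'_esd (hp n)]
    have hppos : (0:ℝ) < p n := by exact_mod_cast hp n
    exact (div_le_div_iff_of_pos_right hppos).mpr (by exact_mod_cast count_le (hSig1 n) (hSig2 n) t)
  have comp2 : ∀ n t, cdf' (esd (Sig2 n) (hSig2 n)) (t - specNorm (Sig1 n - Sig2 n))
      ≤ cdf' (esd (Sig1 n) (hSig1 n)) t := by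
    intro n t
    rw [cdf'_esd (hp n), cdf'_esd (hp n)]
    have h := count_le (hSig2 n) (hSig1 n) (t - specNorm (Sig1 n - Sig2 n))
    rw [specNorm_sub_symm (Sig2 n) (Sig1 n), sub_add_cancel] at h
    have hppos : (0:ℝ) < p n := by exact_mod_cast hp n
    exact (div_le_div_iff_of_pos_right hppos).mpr (by exact_mod_cast h)
  -- key quantitative bound
  have keybd : ∀ n, kolDist (esd (Sig1 n) (hSig1 n)) ν
      ≤ Hconst * specNorm (Sig1 n - Sig2 n) ^ β + kolDist (esd (Sig2 n) (hSig2 n)) ν := by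
    intro n
    haveI := hP1 n; haveI := hP2 n
    set ε := specNorm (Sig1 n - Sig2 n) with hεdef
    apply kolDist_le
    intro t
    have hq1 := abs_le.mp (le_kolDist (μ := esd (Sig2 n) (hSig2 n)) (ν := ν) (t + ε))
    have hq2 := abs_le.mp (le_kolDist (μ := esd (Sig2 n) (hSig2 n)) (ν := ν) (t - ε))
    have hc1 := hHol (t + ε) t
    have hc2 := hHol (t - ε) t
    have he1 : |t + ε - t| = ε := by
      rw [add_sub_cancel_left]; exact abs_of_nonneg (hε0 n)
    have he2 : |t - ε - t| = ε := by
      have h : t - ε - t = -ε := by ring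
      rw [h, abs_neg]; exact abs_of_nonneg (hε0 n)
    rw [he1] at hc1; rw [he2] at hc2
    have hc1' := abs_le.mp hc1
    have hc2' := abs_le.mp hc2
    have h1 := comp1 n t
    have h2 := comp2 n t
    rw [abs_le]
    constructor
    · linarith [hq2.1, hc2'.1, hc2'.2]
    · linarith [hq1.2, hc1'.1, hc1'.2]
  constructor
  · -- weak convergence of the esd of Sig1
    intro f
    obtain ⟨K1, hK1⟩ := hb1
    obtain ⟨K2, hK2⟩ := hb2
    set K := max K1 K2 with hKdef
    have hKb1 : ∀ n i, (hSig1 n).eigenvalues i ∈ Set.Icc (-K) K := by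
      intro n i
      have h : |(hSig1 n).eigenvalues i| ≤ K := le_trans (norm_eigenvalue_le (hSig1 n) i)
        (le_trans (hK1 n) (le_max_left K1 K2))
      exact Set.mem_Icc.mpr (abs_le.mp h)
    have hKb2 : ∀ n i, (hSig2 n).eigenvalues i ∈ Set.Icc (-K) K := by
      intro n i
      have h : |(hSig2 n).eigenvalues i| ≤ K := le_trans (norm_eigenvalue_le (hSig2 n) i)
        (le_trans (hK2 n) (le_max_right K1 K2))
      exact Set.mem_Icc.mpr (abs_le.mp h)
    have hsubt : Tendsto (fun n => (∫ x, f x ∂(esd (Sig1 n) (hSig1 n)))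
        - ∫ x, f x ∂(esd (Sig2 n) (hSig2 n))) atTop (nhds 0) := by
      rw [Metric.tendsto_atTop]
      intro δ hδ
      have huc : UniformContinuousOn f (Set.Icc (-K) K) :=
        isCompact_Icc.uniformContinuousOn_of_continuous f.continuous.continuousOn
      rw [Metric.uniformContinuousOn_iff] at huc
      obtain ⟨η, hη, hucc⟩ := huc (δ/2) (by linarith)
      obtain ⟨N, hN⟩ := eventually_atTop.mp (hdiff.eventually_lt_const hη)
      refine ⟨N, fun n hn => ?_⟩
      rw [Real.dist_eq, sub_zero, integral_esd, integral_esd]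
      set σ1 := Tuple.sort (hSig1 n).eigenvalues with hσ1
      set σ2 := Tuple.sort (hSig2 n).eigenvalues with hσ2
      have hs1 : ∑ i, f ((hSig1 n).eigenvalues i)
          = ∑ i, f ((hSig1 n).eigenvalues (σ1 i)) :=
        (Equiv.sum_comp σ1 (fun i => f ((hSig1 n).eigenvalues i))).symm
      have hs2 : ∑ i, f ((hSig2 n).eigenvalues i)
          = ∑ i, f ((hSig2 n).eigenvalues (σ2 i)) :=
        (Equiv.sum_comp σ2 (fun i => f ((hSig2 n).eigenvalues i))).symm
      rw [hs1, hs2, ← mul_sub, ← Finset.sum_sub_distrib]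
      have hterm : ∀ k : Fin (p n), |f ((hSig1 n).eigenvalues (σ1 k))
          - f ((hSig2 n).eigenvalues (σ2 k))| ≤ δ/2 := by
        intro k
        have hw := sorted_weyl (hSig1 n) (hSig2 n) k
        have hdist : dist ((hSig1 n).eigenvalues (σ1 k)) ((hSig2 n).eigenvalues (σ2 k)) < η := by
          rw [Real.dist_eq]
          exact lt_of_le_of_lt hw (hN n hn)
        have h := hucc _ (hKb1 n (σ1 k)) _ (hKb2 n (σ2 k)) hdist
        rw [Real.dist_eq] at h
        exact h.le
      have hb : |∑ k : Fin (p n), (f ((hSig1 n).eigenvalues (σ1 k))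
          - f ((hSig2 n).eigenvalues (σ2 k)))| ≤ (p n : ℝ) * (δ/2) := by
        calc |∑ k : Fin (p n), (f ((hSig1 n).eigenvalues (σ1 k))
            - f ((hSig2 n).eigenvalues (σ2 k)))|
            ≤ ∑ k : Fin (p n), |f ((hSig1 n).eigenvalues (σ1 k))
              - f ((hSig2 n).eigenvalues (σ2 k))| := Finset.abs_sum_le_sum_abs _ _
        _ ≤ ∑ _k : Fin (p n), δ/2 := Finset.sum_le_sum fun k _ => hterm k
        _ = (p n : ℝ) * (δ/2) := by
            rw [Finset.sum_const, Finset.card_univ, Fintype.card_fin, nsmul_eq_mul]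
      rw [abs_mul, abs_of_nonneg (by positivity : (0:ℝ) ≤ ((p n : ℝ))⁻¹)]
      have hppos : (0:ℝ) < p n := by exact_mod_cast hp n
      calc ((p n : ℝ))⁻¹ * |∑ k : Fin (p n), (f ((hSig1 n).eigenvalues (σ1 k))
          - f ((hSig2 n).eigenvalues (σ2 k)))|
          ≤ ((p n : ℝ))⁻¹ * ((p n : ℝ) * (δ/2)) := by
            exact mul_le_mul_of_nonneg_left hb (by positivity)
      _ = δ/2 := by field_simp
      _ < δ := by linarith
    have := hsubt.add (hweak f)
    simpa using this
  · -- quantitative Kolmogorov bound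
    refine ⟨max Hconst 1, lt_of_lt_of_le zero_lt_one (le_max_right _ _), ?_⟩
    obtain ⟨N, hN⟩ := eventually_atTop.mp (hdiff.eventually_lt_const zero_lt_one)
    refine ⟨N, fun n hn => ?_⟩
    haveI := hP1 n; haveI := hP2 n
    set ε := specNorm (Sig1 n - Sig2 n) with hεdef
    have hε1 : ε ≤ 1 := (hN n hn).le
    have hεn : 0 ≤ ε := hε0 n
    have hβ' : 0 < β / (4 + 2*β) := div_pos hβ (by linarith)
    have hexp : ε ^ β ≤ ε ^ (β / (4 + 2*β)) := by
      rcases eq_or_lt_of_le hεn with h0 | h0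
      · rw [← h0, Real.zero_rpow hβ.ne', Real.zero_rpow hβ'.ne']
      · exact Real.rpow_le_rpow_of_exponent_ge h0 hε1 (div_le_self hβ.le (by linarith))
    set d := kolDist (esd (Sig2 n) (hSig2 n)) ν with hddef
    have hd : 0 ≤ d := kolDist_nonneg
    have hr : 0 ≤ ε ^ (β / (4 + 2*β)) := Real.rpow_nonneg hεn _
    have hC1 : Hconst ≤ max Hconst 1 := le_max_left _ _
    have hC2 : (1:ℝ) ≤ max Hconst 1 := le_max_right _ _
    have e1 : Hconst * ε ^ β ≤ Hconst * ε ^ (β / (4 + 2*β)) :=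
      mul_le_mul_of_nonneg_left hexp hH.le
    have e2 : Hconst * ε ^ (β / (4 + 2*β)) ≤ max Hconst 1 * ε ^ (β / (4 + 2*β)) :=
      mul_le_mul_of_nonneg_right hC1 hr
    have e3 : d ≤ max Hconst 1 * d := le_mul_of_one_le_left hd hC2
    calc kolDist (esd (Sig1 n) (hSig1 n)) ν ≤ Hconst * ε ^ β + d := keybd n
    _ ≤ max Hconst 1 * (ε ^ (β / (4 + 2*β)) + d) := by rw [mul_add]; linarith
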